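/- Fix ℏ > 0, σ > 0, γ > 0, g > 0 and p₀, q₀ ∈ ℝ; set β = 2σ²/g. For t, ω ∈ ℝ let sh(t,ω) = sinh(ωt)/ω for ω ≠ 0 with sh(t,0) = t, and ch(t,ω) = (cosh(ωt) − 1)/ω² for ω ≠ 0 with ch(t,0) = t²/2. Writing ω = σγη, define u(t,η) = cosh(ωt) + (ω²/β)·sh(t,ω), v(t,η) = cosh(ωt) + β·sh(t,ω), a(t,η) = g·v/u, P(t,η) = p₀/u, Q(t,η) = −η·(β·ch(t,ω) + sh(t,ω))/v, φ(t,η) = β·p₀·η·ch(t,ω)/v, D(t,η) = (1/(2γ²))·(t·v − sh(t,ω) − 2β·ch(t,ω))/v + (γ²η²p₀²/2)·sh(t,ω)/u, and χ(t,ξ,η) = u(t,η)^{−1/2}·exp(−D(t,η)/ℏ)·exp((i/ℏ)(φ(t,η) + q₀·η + P(t,η)·(ξ − Q(t,η))))·exp(−η²/(4ℏg) − a(t,η)·(ξ − Q(t,η))²/(4ℏ)). Then for every t ≥ 0: (i) the second derivative of ξ ↦ χ(t,ξ,0) at ξ = 0 equals −(1/ℏ²)·(p₀² + ℏ(g/2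 + σ²t)); (ii) the mixed second partial derivative ∂_η∂_ξχ(t,ξ,η) at (ξ,η) = (0,0) equals −(1/ℏ²)·(p₀(q₀ + tp₀) + ℏ(g·t/2 + σ²t²/2)). Equivalently, the momentum variance of the evolved state is ℏ(g/2 + σ²t) and its symmetrized position–momentum covariance is ℏ(gt/2 + σ²t²/2). -/

import Mathlib

lemma aux_sinh_bd {y : ℝ} (hy : |y| ≤ 1) : |Real.sinh y - y| ≤ |y|^3 := by
  have h1 := Real.exp_bound hy (n := 3) (by norm_num)
  have h2 := Real.exp_bound (x := -y) (by rwa [abs_neg]) (n := 3) (by norm_num)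
  simp [Finset.sum_range_succ, Nat.factorial] at h1 h2
  have hrw : Real.sinh y - y =
      ((Real.exp y - (1 + y + y^2/2)) - (Real.exp (-y) - (1 + -y + (-y)^2/2)))/2 := by
    rw [Real.sinh_eq]; ring
  rw [hrw, abs_le] at *
  constructor <;> [nlinarith [h1.1, h1.2, h2.1, h2.2]; nlinarith [h1.1, h1.2, h2.1, h2.2]]

lemma aux_cosh_bd {y : ℝ} (hy : |y| ≤ 1) : |Real.cosh y - (1 + y^2/2)| ≤ |y|^4 := by
  have h1 := Real.exp_bound hy (n := 4) (by norm_num)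
  have h2 := Real.exp_bound (x := -y) (by rwa [abs_neg]) (n := 4) (by norm_num)
  simp [Finset.sum_range_succ, Nat.factorial] at h1 h2
  have hrw : Real.cosh y - (1 + y^2/2) =
      ((Real.exp y - (1 + y + y^2/2 + y^3/6)) + (Real.exp (-y) - (1 + -y + (-y)^2/2 + (-y)^3/6)))/2 := by
    rw [Real.cosh_eq]; ring
  rw [hrw, abs_le] at *
  constructor <;> [nlinarith [h1.1, h1.2, h2.1, h2.2]; nlinarith [h1.1, h1.2, h2.1, h2.2]]

lemma aux_hasDerivAt_sh (t : ℝ) :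
    HasDerivAt (fun ω : ℝ => if ω = 0 then t else Real.sinh (ω*t)/ω) 0 0 := by
  rw [hasDerivAt_iff_tendsto_slope]
  apply squeeze_zero_norm' (a := fun ω : ℝ => |t|^3 * |ω|)
  · have h1 : ∀ᶠ ω in nhdsWithin (0:ℝ) {(0:ℝ)}ᶜ, |ω| < (|t|+1)⁻¹ := by
      apply Filter.Eventually.filter_mono nhdsWithin_le_nhds
      have : Filter.Tendsto (fun ω : ℝ => |ω|) (nhds 0) (nhds 0) := by
        simpa using continuous_abs.tendsto (0:ℝ)
      exact this.eventually_lt_const (by positivity)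
    have h2 : ∀ᶠ ω in nhdsWithin (0:ℝ) {(0:ℝ)}ᶜ, ω ≠ 0 := by
      filter_upwards [self_mem_nhdsWithin] with ω hω using hω
    filter_upwards [h1, h2] with ω hω1 hω2
    have hω2' : ω ≠ 0 := hω2
    have hyt : |ω * t| ≤ 1 := by
      rw [abs_mul]
      rcases le_or_gt (|t|) 0 with h | h
      · nlinarith [abs_nonneg ω, abs_nonneg t]
      · have : |ω| * |t| < (|t|+1)⁻¹ * (|t|+1) := by
          apply mul_lt_mul' (le_of_lt hω1) (by linarith) (abs_nonneg t) (by positivity) |>.trans_le le_rfl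
        rw [inv_mul_cancel₀ (by positivity)] at this
        exact this.le
    have hb := aux_sinh_bd hyt
    have hslope : slope (fun ω : ℝ => if ω = 0 then t else Real.sinh (ω*t)/ω) 0 ω
        = (Real.sinh (ω*t) - ω*t)/ω^2 := by
      rw [slope_def_field]
      simp only [if_pos rfl, if_true, if_neg hω2']
      rw [sub_zero, div_eq_div_iff hω2' (pow_ne_zero 2 hω2')]
      field_simp
    rw [hslope]
    rw [Real.norm_eq_abs, abs_div, div_le_iff₀ (by positivity : (0:ℝ) < |ω^2|)]
    calc |Real.sinh (ω*t) - ω*t| ≤ |ω*t|^3 := hb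
      _ = |t|^3 * |ω| * |ω^2| := by rw [abs_mul, abs_pow]; ring
  · have : Filter.Tendsto (fun ω : ℝ => |t|^3 * |ω|) (nhds 0) (nhds (|t|^3 * |0|)) :=
      (continuous_const.mul continuous_abs).tendsto 0
    simpa using this.mono_left nhdsWithin_le_nhds

lemma aux_hasDerivAt_ch (t : ℝ) :
    HasDerivAt (fun ω : ℝ => if ω = 0 then t^2/2 else (Real.cosh (ω*t) - 1)/ω^2) 0 0 := by
  rw [hasDerivAt_iff_tendsto_slope]
  apply squeeze_zero_norm' (a := fun ω : ℝ => |t|^4 * |ω|)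
  · have h1 : ∀ᶠ ω in nhdsWithin (0:ℝ) {(0:ℝ)}ᶜ, |ω| < (|t|+1)⁻¹ := by
      apply Filter.Eventually.filter_mono nhdsWithin_le_nhds
      have : Filter.Tendsto (fun ω : ℝ => |ω|) (nhds 0) (nhds 0) := by
        simpa using continuous_abs.tendsto (0:ℝ)
      exact this.eventually_lt_const (by positivity)
    have h2 : ∀ᶠ ω in nhdsWithin (0:ℝ) {(0:ℝ)}ᶜ, ω ≠ 0 := by
      filter_upwards [self_mem_nhdsWithin] with ω hω using hω
    filter_upwards [h1, h2] with ω hω1 hω2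
    have hω2' : ω ≠ 0 := hω2
    have hyt : |ω * t| ≤ 1 := by
      rw [abs_mul]
      rcases le_or_gt (|t|) 0 with h | h
      · nlinarith [abs_nonneg ω, abs_nonneg t]
      · have : |ω| * |t| < (|t|+1)⁻¹ * (|t|+1) := by
          apply mul_lt_mul' (le_of_lt hω1) (by linarith) (abs_nonneg t) (by positivity) |>.trans_le le_rfl
        rw [inv_mul_cancel₀ (by positivity)] at this
        exact this.le
    have hb := aux_cosh_bd hyt
    have hslope : slope (fun ω : ℝ => if ω = 0 then t^2/2 else (Real.cosh (ω*t) - 1)/ω^2) 0 ω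
        = (Real.cosh (ω*t) - (1 + (ω*t)^2/2))/ω^3 := by
      rw [slope_def_field]
      simp only [if_pos rfl, if_true, if_neg hω2']
      rw [sub_zero, div_eq_div_iff hω2' (pow_ne_zero 3 hω2')]
      field_simp
      ring
    rw [hslope]
    rw [Real.norm_eq_abs, abs_div, div_le_iff₀ (by positivity : (0:ℝ) < |ω^3|)]
    calc |Real.cosh (ω*t) - (1 + (ω*t)^2/2)| ≤ |ω*t|^4 := hb
      _ = |t|^4 * |ω| * |ω^3| := by rw [abs_mul, abs_pow]; ring
  · have : Filter.Tendsto (fun ω : ℝ => |t|^4 * |ω|) (nhds 0) (nhds (|t|^4 * |0|)) :=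
      (continuous_const.mul continuous_abs).tendsto 0
    simpa using this.mono_left nhdsWithin_le_nhds

set_option maxHeartbeats 4000000 in
/-- Second moments of the evolved state: the characteristic function
`χ(t,ξ,η)` satisfies `∂_ξ²χ(t,0,0) = −(1/ℏ²)(p₀² + ℏ(g/2 + σ²t))` and
`∂_η∂_ξχ(t,0,0) = −(1/ℏ²)(p₀(q₀+tp₀) + ℏ(gt/2 + σ²t²/2))`, i.e. the momentum
variance is `ℏ(g/2 + σ²t)` and the symmetrized covariance is `ℏ(gt/2 + σ²t²/2)`. -/
theorem stmt12 (hbar σ γ g p₀ q₀ : ℝ)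
    (hhbar : 0 < hbar) (hσ : 0 < σ) (hγ : 0 < γ) (hg : 0 < g)
    (β : ℝ) (hβ : β = 2 * σ ^ 2 / g)
    (sh ch : ℝ → ℝ → ℝ)
    (hsh : ∀ t ω, sh t ω = if ω = 0 then t else Real.sinh (ω * t) / ω)
    (hch : ∀ t ω, ch t ω = if ω = 0 then t ^ 2 / 2 else (Real.cosh (ω * t) - 1) / ω ^ 2)
    (u v a P Q φ D : ℝ → ℝ → ℝ) (χ : ℝ → ℝ → ℝ → ℂ)
    (hu : ∀ t η, u t η = Real.cosh (σ * γ * η * t) + ((σ * γ * η) ^ 2 / β) * sh t (σ * γ * η))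
    (hv : ∀ t η, v t η = Real.cosh (σ * γ * η * t) + β * sh t (σ * γ * η))
    (ha : ∀ t η, a t η = g * v t η / u t η)
    (hP : ∀ t η, P t η = p₀ / u t η)
    (hQ : ∀ t η, Q t η = -η * (β * ch t (σ * γ * η) + sh t (σ * γ * η)) / v t η)
    (hφ : ∀ t η, φ t η = β * p₀ * η * ch t (σ * γ * η) / v t η)
    (hD : ∀ t η, D t η =
      (1 / (2 * γ ^ 2)) *
          ((t * v t η - sh t (σ * γ * η) - 2 * β * ch t (σ * γ * η)) / v t η)
        + (γ ^ 2 * η ^ 2 * p₀ ^ 2 / 2) * (sh t (σ * γ * η) / u t η))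
    (hχ : ∀ t ξ η, χ t ξ η =
      ((Real.sqrt (u t η))⁻¹ : ℝ) * Complex.exp (-(D t η : ℂ) / (hbar : ℂ)) *
        Complex.exp ((Complex.I / (hbar : ℂ)) *
          ((φ t η + q₀ * η + P t η * (ξ - Q t η) : ℝ) : ℂ)) *
        Complex.exp (((-(η ^ 2 / (4 * hbar * g)) - a t η * (ξ - Q t η) ^ 2 / (4 * hbar) : ℝ) : ℂ))) :
    ∀ t ≥ 0,
      iteratedDeriv 2 (fun ξ => χ t ξ 0) 0 =
        -(1 / (hbar : ℂ) ^ 2) * ((p₀ ^ 2 + hbar * (g / 2 + σ ^ 2 * t) : ℝ) : ℂ) ∧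
      deriv (fun η => deriv (fun ξ => χ t ξ η) 0) 0 =
        -(1 / (hbar : ℂ) ^ 2) *
          ((p₀ * (q₀ + t * p₀) + hbar * (g * t / 2 + σ ^ 2 * t ^ 2 / 2) : ℝ) : ℂ) := by
  intro t ht

  have hsgz : σ * γ * (0:ℝ) = 0 := by ring
  have hshv0 : sh t (σ * γ * 0) = t := by rw [hsgz, hsh]; simp
  have hchv0 : ch t (σ * γ * 0) = t^2/2 := by rw [hsgz, hch]; simp
  have hcoshv0 : Real.cosh (σ * γ * 0 * t) = 1 := by
    rw [show σ * γ * (0:ℝ) * t = 0 by ring, Real.cosh_zero]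
  have hshz : sh t 0 = t := by rw [hsh]; simp
  have hchz : ch t 0 = t^2/2 := by rw [hch]; simp
  have hβpos : 0 < β := by rw [hβ]; positivity
  have hv0pos : (0:ℝ) < 1 + β * t := by nlinarith
  have hu00 : u t 0 = 1 := by rw [hu, hcoshv0, hshv0]; ring
  have hv00 : v t 0 = 1 + β * t := by rw [hv, hcoshv0, hshv0]
  have ha00 : a t 0 = g * (1 + β * t) := by
    rw [ha, hu00, hv00]; field_simp
  have hP00 : P t 0 = p₀ := by rw [hP, hu00]; field_simp
  have hQ00 : Q t 0 = 0 := by rw [hQ]; ring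
  have hφ00 : φ t 0 = 0 := by rw [hφ]; ring
  have hD00 : D t 0 = 0 := by
    rw [hD, hshv0, hchv0, hv00, hu00]
    field_simp
    ring
  -- derivative lemmas at η = 0
  have hσγ : σ * γ ≠ 0 := by positivity
  have hlin : HasDerivAt (fun η : ℝ => σ * γ * η) (σ * γ) 0 := by
    simpa using (hasDerivAt_id (0:ℝ)).const_mul (σ * γ)
  have hshc : HasDerivAt (fun η => sh t (σ * γ * η)) 0 0 := by
    have hfe : (fun η => sh t (σ * γ * η))
        = (fun ω : ℝ => if ω = 0 then t else Real.sinh (ω*t)/ω) ∘ (fun η : ℝ => σ * γ * η) := by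
      funext η; simp [hsh, Function.comp]
    rw [hfe]
    have base : HasDerivAt (fun ω : ℝ => if ω = 0 then t else Real.sinh (ω*t)/ω) 0 (σ * γ * 0) := by
      rw [hsgz]; exact aux_hasDerivAt_sh t
    simpa using base.comp 0 hlin
  have hchc : HasDerivAt (fun η => ch t (σ * γ * η)) 0 0 := by
    have hfe : (fun η => ch t (σ * γ * η))
        = (fun ω : ℝ => if ω = 0 then t^2/2 else (Real.cosh (ω*t) - 1)/ω^2) ∘ (fun η : ℝ => σ * γ * η) := by
      funext η; simp [hch, Function.comp]
    rw [hfe]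
    have base : HasDerivAt (fun ω : ℝ => if ω = 0 then t^2/2 else (Real.cosh (ω*t) - 1)/ω^2) 0 (σ * γ * 0) := by
      rw [hsgz]; exact aux_hasDerivAt_ch t
    simpa using base.comp 0 hlin
  have hcoshc : HasDerivAt (fun η => Real.cosh (σ * γ * η * t)) 0 0 := by
    have hlin2 : HasDerivAt (fun η : ℝ => σ * γ * η * t) (σ * γ * t) 0 := by
      simpa using ((hasDerivAt_id (0:ℝ)).const_mul (σ * γ)).mul_const t
    have base : HasDerivAt Real.cosh (Real.sinh (σ * γ * 0 * t)) (σ * γ * 0 * t) :=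
      Real.hasDerivAt_cosh _
    have := base.comp 0 hlin2
    simpa [hsgz, Function.comp_def] using this
  have huc : HasDerivAt (fun η => u t η) 0 0 := by
    have hfe : (fun η => u t η) = fun η =>
        Real.cosh (σ * γ * η * t) + ((σ * γ * η) ^ 2 / β) * sh t (σ * γ * η) :=
      funext fun η => hu t η
    rw [hfe]
    have h1 : HasDerivAt (fun η : ℝ => (σ * γ * η) ^ 2 / β) 0 0 := by
      have := (hlin.pow 2).div_const β
      simpa using this
    have h2 := h1.fun_mul hshc
    have := hcoshc.fun_add h2
    simpa using this
  have hvc : HasDerivAt (fun η => v t η) 0 0 := by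
    have hfe : (fun η => v t η) = fun η =>
        Real.cosh (σ * γ * η * t) + β * sh t (σ * γ * η) := funext fun η => hv t η
    rw [hfe]
    simpa using hcoshc.fun_add (hshc.const_mul β)
  have hu00' : u t 0 ≠ 0 := by rw [hu00]; norm_num
  have hv00' : v t 0 ≠ 0 := by rw [hv00]; positivity
  have hac : HasDerivAt (fun η => a t η) 0 0 := by
    have hfe : (fun η => a t η) = fun η => g * v t η / u t η := funext fun η => ha t η
    rw [hfe]
    have := ((hvc.const_mul g).fun_div huc hu00')
    simpa using this
  have hPc : HasDerivAt (fun η => P t η) 0 0 := by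
    have hfe : (fun η => P t η) = fun η => p₀ / u t η := funext fun η => hP t η
    rw [hfe]
    simpa using (hasDerivAt_const (0:ℝ) p₀).fun_div huc hu00'
  have hQc : HasDerivAt (fun η => Q t η) (-(β * (t^2/2) + t) / (1 + β * t)) 0 := by
    have hfe : (fun η => Q t η) = fun η =>
        -η * (β * ch t (σ * γ * η) + sh t (σ * γ * η)) / v t η := funext fun η => hQ t η
    rw [hfe]
    have hnum : HasDerivAt (fun η : ℝ => -η * (β * ch t (σ * γ * η) + sh t (σ * γ * η)))
        (-(β * (t^2/2) + t)) 0 := by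
      have hneg : HasDerivAt (fun η : ℝ => -η) (-1) 0 := by simpa using (hasDerivAt_id (0:ℝ)).fun_neg
      have hsum : HasDerivAt (fun η => β * ch t (σ * γ * η) + sh t (σ * γ * η)) 0 0 := by
        simpa using (hchc.const_mul β).fun_add hshc
      have := hneg.fun_mul hsum
      simpa [hchz, hshz] using this
    have := hnum.fun_div hvc hv00'
    rw [hv00] at this
    refine this.congr_deriv ?_
    simp [hchv0, hshv0]
    field_simp
  have hφc : HasDerivAt (fun η => φ t η) (β * p₀ * (t^2/2) / (1 + β * t)) 0 := by
    have hfe : (fun η => φ t η) = fun η =>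
        β * p₀ * η * ch t (σ * γ * η) / v t η := funext fun η => hφ t η
    rw [hfe]
    have hnum : HasDerivAt (fun η : ℝ => β * p₀ * η * ch t (σ * γ * η)) (β * p₀ * (t^2/2)) 0 := by
      have h1 : HasDerivAt (fun η : ℝ => β * p₀ * η) (β * p₀) 0 := by
        simpa using (hasDerivAt_id (0:ℝ)).const_mul (β * p₀)
      have := h1.fun_mul hchc
      simpa [hchz] using this
    have := hnum.fun_div hvc hv00'
    rw [hv00] at this
    refine this.congr_deriv ?_
    field_simp
    ring
  have hDc : HasDerivAt (fun η => D t η) 0 0 := by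
    have hfe : (fun η => D t η) = fun η =>
        (1 / (2 * γ ^ 2)) *
            ((t * v t η - sh t (σ * γ * η) - 2 * β * ch t (σ * γ * η)) / v t η)
          + (γ ^ 2 * η ^ 2 * p₀ ^ 2 / 2) * (sh t (σ * γ * η) / u t η) :=
      funext fun η => hD t η
    rw [hfe]
    have hW : HasDerivAt (fun η => t * v t η - sh t (σ * γ * η) - 2 * β * ch t (σ * γ * η)) 0 0 := by
      simpa using ((hvc.const_mul t).fun_sub hshc).fun_sub (hchc.const_mul (2*β))
    have h1 : HasDerivAt (fun η =>
        (1 / (2 * γ ^ 2)) * ((t * v t η - sh t (σ * γ * η) - 2 * β * ch t (σ * γ * η)) / v t η)) 0 0 := by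
      have hq : HasDerivAt (fun η =>
          (t * v t η - sh t (σ * γ * η) - 2 * β * ch t (σ * γ * η)) / v t η) 0 0 := by
        simpa using hW.fun_div hvc hv00'
      have h := hq.const_mul (1 / (2 * γ ^ 2))
      rwa [mul_zero] at h
    have h2 : HasDerivAt (fun η => (γ ^ 2 * η ^ 2 * p₀ ^ 2 / 2) * (sh t (σ * γ * η) / u t η)) 0 0 := by
      have hA : HasDerivAt (fun η : ℝ => γ ^ 2 * η ^ 2 * p₀ ^ 2 / 2) 0 0 := by
        have : HasDerivAt (fun η : ℝ => η ^ 2) (2 * 0 ^ 1) 0 := hasDerivAt_pow 2 0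
        have h := ((this.const_mul (γ^2)).mul_const (p₀^2)).div_const 2
        simpa using h
      have hB := hshc.fun_div huc hu00'
      have := hA.fun_mul hB
      simpa using this
    simpa using h1.fun_add h2
  -- complex blocks
  have hh' : (hbar:ℂ) ≠ 0 := Complex.ofReal_ne_zero.mpr (ne_of_gt hhbar)
  have hF1 : HasDerivAt (fun η => (((Real.sqrt (u t η))⁻¹ : ℝ) : ℂ)) 0 0 := by
    have hs : HasDerivAt (fun η => Real.sqrt (u t η)) 0 0 := by
      have := (Real.hasDerivAt_sqrt hu00').comp 0 huc
      simpa [Function.comp_def] using this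
    have hinv := hs.inv (by rw [hu00, Real.sqrt_one]; exact one_ne_zero)
    have := hinv.ofReal_comp
    simpa using this
  have hF2 : HasDerivAt (fun η => Complex.exp (-((D t η : ℝ):ℂ)/(hbar:ℂ))) 0 0 := by
    have hi : HasDerivAt (fun η => -((D t η : ℝ):ℂ)/(hbar:ℂ)) 0 0 := by
      simpa using (hDc.ofReal_comp).fun_neg.div_const (hbar:ℂ)
    simpa using hi.cexp
  have hrc : HasDerivAt (fun η => φ t η + q₀ * η + P t η * (0 - Q t η))
      (β * p₀ * (t^2/2) / (1 + β * t) + q₀ - p₀ * (-(β * (t^2/2) + t) / (1 + β * t))) 0 := by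
    have h1 : HasDerivAt (fun η : ℝ => q₀ * η) q₀ 0 := by
      simpa using (hasDerivAt_id (0:ℝ)).const_mul q₀
    have h2 := hPc.fun_mul ((hasDerivAt_const (0:ℝ) (0:ℝ)).fun_sub hQc)
    have := (hφc.fun_add h1).fun_add h2
    refine this.congr_deriv ?_
    rw [hP00, hQ00]
    ring
  have hF3 : HasDerivAt (fun η => Complex.exp ((Complex.I/(hbar:ℂ)) *
        ((φ t η + q₀ * η + P t η * (0 - Q t η) : ℝ) : ℂ)))
      (Complex.I/(hbar:ℂ) *
        ((β * p₀ * (t^2/2) / (1 + β * t) + q₀ - p₀ * (-(β * (t^2/2) + t) / (1 + β * t)) : ℝ) : ℂ)) 0 := by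
    have hi := (hrc.ofReal_comp).const_mul (Complex.I/(hbar:ℂ))
    have := hi.cexp
    convert this using 1
    rw [hφ00, hQ00, hP00]
    norm_num
  have hsc : HasDerivAt (fun η => -(η^2/(4*hbar*g)) - a t η * (0 - Q t η)^2/(4*hbar)) 0 0 := by
    have h1 : HasDerivAt (fun η : ℝ => -(η^2/(4*hbar*g))) 0 0 := by
      simpa using ((hasDerivAt_pow 2 (0:ℝ)).div_const (4*hbar*g)).fun_neg
    have h2 : HasDerivAt (fun η : ℝ => a t η * (0 - Q t η)^2/(4*hbar)) 0 0 := by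
      have hq2 := ((hasDerivAt_const (0:ℝ) (0:ℝ)).fun_sub hQc).pow 2
      have := (hac.fun_mul hq2).div_const (4*hbar)
      refine this.congr_deriv ?_
      rw [hQ00]
      norm_num
    simpa using h1.fun_sub h2
  have hF4 : HasDerivAt (fun η => Complex.exp
      (((-(η^2/(4*hbar*g)) - a t η * (0 - Q t η)^2/(4*hbar) : ℝ)) : ℂ)) 0 0 := by
    simpa using (hsc.ofReal_comp).cexp
  have hχ00 : χ t 0 0 = 1 := by
    rw [hχ, hu00, hD00, hφ00, hQ00]
    simp
  have hχ0c : HasDerivAt (fun η => χ t 0 η)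
      (Complex.I/(hbar:ℂ) *
        ((β * p₀ * (t^2/2) / (1 + β * t) + q₀ - p₀ * (-(β * (t^2/2) + t) / (1 + β * t)) : ℝ) : ℂ)) 0 := by
    have hfe : (fun η => χ t 0 η) = fun η =>
        (((Real.sqrt (u t η))⁻¹ : ℝ) : ℂ) * Complex.exp (-((D t η : ℝ):ℂ)/(hbar:ℂ)) *
          Complex.exp ((Complex.I/(hbar:ℂ)) * ((φ t η + q₀ * η + P t η * (0 - Q t η) : ℝ) : ℂ)) *
          Complex.exp (((-(η^2/(4*hbar*g)) - a t η * (0 - Q t η)^2/(4*hbar) : ℝ)) : ℂ) :=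
      funext fun η => hχ t 0 η
    rw [hfe]
    have h := ((hF1.fun_mul hF2).fun_mul hF3).fun_mul hF4
    refine h.congr_deriv ?_
    rw [hu00, hD00, hφ00, hQ00, ha00]
    simp
  have hMc : HasDerivAt (fun η => Complex.I/(hbar:ℂ) * ((P t η : ℝ) : ℂ)
        + ((a t η * Q t η / (2*hbar) : ℝ) : ℂ))
      ((((g * (1 + β * t)) * (-(β * (t^2/2) + t) / (1 + β * t)) / (2*hbar) : ℝ)) : ℂ) 0 := by
    have h1 : HasDerivAt (fun η => Complex.I/(hbar:ℂ) * ((P t η : ℝ) : ℂ)) 0 0 := by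
      simpa using (hPc.ofReal_comp).const_mul (Complex.I/(hbar:ℂ))
    have h2 := ((hac.fun_mul hQc).div_const (2*hbar)).ofReal_comp
    have := h1.fun_add h2
    refine this.congr_deriv ?_
    rw [hQ00, ha00]
    push_cast
    ring
  have hkey : (fun η => deriv (fun ξ => χ t ξ η) 0)
      = fun η => χ t 0 η * (Complex.I/(hbar:ℂ) * ((P t η : ℝ) : ℂ)
          + ((a t η * Q t η / (2*hbar) : ℝ) : ℂ)) := by
    funext η
    have hr : HasDerivAt (fun ξ : ℝ => φ t η + q₀ * η + P t η * (ξ - Q t η)) (P t η) 0 := by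
      have := (((hasDerivAt_id (0:ℝ)).sub_const (Q t η)).const_mul (P t η)).const_add
        (φ t η + q₀ * η)
      simpa using this
    have hs2 : HasDerivAt (fun ξ : ℝ => -(η^2/(4*hbar*g)) - a t η * (ξ - Q t η)^2/(4*hbar))
        (-(a t η * (2*((0:ℝ) - Q t η))/(4*hbar))) 0 := by
      have hq2 := ((hasDerivAt_id (0:ℝ)).sub_const (Q t η)).pow 2
      have h2 := (hq2.const_mul (a t η)).div_const (4*hbar)
      have h3 := (hasDerivAt_const (0:ℝ) (-(η^2/(4*hbar*g)))).fun_sub h2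
      refine h3.congr_deriv ?_
      simp only [id_eq]
      ring
    have hF3ξ := ((hr.ofReal_comp).const_mul (Complex.I/(hbar:ℂ))).cexp
    have hF4ξ := (hs2.ofReal_comp).cexp
    have hC1 := hasDerivAt_const (0:ℝ) ((((Real.sqrt (u t η))⁻¹ : ℝ)) : ℂ)
    have hC2 := hasDerivAt_const (0:ℝ) (Complex.exp (-((D t η : ℝ) : ℂ)/(hbar:ℂ)))
    have hbig := (((hC1.fun_mul hC2).fun_mul hF3ξ).fun_mul hF4ξ)
    have hfe : (fun ξ => χ t ξ η) = fun ξ =>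
        (((Real.sqrt (u t η))⁻¹ : ℝ) : ℂ) * Complex.exp (-((D t η : ℝ) : ℂ)/(hbar:ℂ)) *
          Complex.exp ((Complex.I/(hbar:ℂ)) * ((φ t η + q₀ * η + P t η * (ξ - Q t η) : ℝ) : ℂ)) *
          Complex.exp (((-(η^2/(4*hbar*g)) - a t η * (ξ - Q t η)^2/(4*hbar) : ℝ)) : ℂ) :=
      funext fun ξ => hχ t ξ η
    rw [hfe, hbig.deriv, hχ t 0 η]
    push_cast
    ring
  have h2final : deriv (fun η => deriv (fun ξ => χ t ξ η) 0) 0 =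
      -(1 / (hbar : ℂ) ^ 2) *
        ((p₀ * (q₀ + t * p₀) + hbar * (g * t / 2 + σ ^ 2 * t ^ 2 / 2) : ℝ) : ℂ) := by
    rw [hkey, (hχ0c.fun_mul hMc).deriv, hχ00, hP00, hQ00, ha00]
    have hrd : ((β * p₀ * (t^2/2) / (1 + β * t) + q₀ - p₀ * (-(β * (t^2/2) + t) / (1 + β * t)) : ℝ) : ℂ)
        = ((q₀ + t * p₀ : ℝ) : ℂ) := by
      rw [show (β * p₀ * (t^2/2) / (1 + β * t) + q₀ - p₀ * (-(β * (t^2/2) + t) / (1 + β * t)) : ℝ)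
          = (q₀ + t * p₀ : ℝ) from by field_simp; ring]
    rw [hrd]
    have haq : (((g * (1 + β * t)) * (-(β * (t^2/2) + t) / (1 + β * t)) / (2*hbar) : ℝ) : ℂ)
        = ((-(g * t / 2 + σ^2 * t^2 / 2)/hbar : ℝ) : ℂ) := by
      rw [show ((g * (1 + β * t)) * (-(β * (t^2/2) + t) / (1 + β * t)) / (2*hbar) : ℝ)
          = (-(g * t / 2 + σ^2 * t^2 / 2)/hbar : ℝ) from by
        rw [hβ]; field_simp; ring]
    rw [haq]
    have hhr : hbar ≠ 0 := ne_of_gt hhbar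
    trans ((-(p₀*(q₀+t*p₀)/hbar^2) + (-(g*t/2+σ^2*t^2/2)/hbar) : ℝ) : ℂ)
    · push_cast
      linear_combination ((p₀:ℂ)*((q₀:ℂ)+(t:ℂ)*(p₀:ℂ))/((hbar:ℂ))^2) * Complex.I_sq
    · rw [show -(1/(hbar:ℂ)^2) * ((p₀*(q₀+t*p₀)+hbar*(g*t/2+σ^2*t^2/2) : ℝ):ℂ)
          = ((-(1/hbar^2) * (p₀*(q₀+t*p₀)+hbar*(g*t/2+σ^2*t^2/2)) : ℝ) : ℂ) from by
        push_cast; ring]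
      exact Complex.ofReal_inj.mpr (by field_simp; ring)
  have h1final : iteratedDeriv 2 (fun ξ => χ t ξ 0) 0 =
      -(1 / (hbar : ℂ) ^ 2) * ((p₀ ^ 2 + hbar * (g / 2 + σ ^ 2 * t) : ℝ) : ℂ) := by
    have hform0 : (fun ξ : ℝ => χ t ξ 0) = fun ξ : ℝ =>
        Complex.exp ((Complex.I * (p₀:ℂ)/(hbar:ℂ)) * (ξ:ℂ)
          + ((-(g*(1+β*t))/(4*hbar) : ℝ) : ℂ) * ((ξ:ℂ)*(ξ:ℂ))) := by
      funext ξ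
      rw [hχ, hu00, hD00, hφ00, hP00, hQ00, ha00, Real.sqrt_one]
      simp only [inv_one, Complex.ofReal_one, one_mul]
      rw [← Complex.exp_add, ← Complex.exp_add]
      congr 1
      push_cast
      ring
    have hA : ∀ ξ : ℝ, HasDerivAt (fun ξ : ℝ => (Complex.I * (p₀:ℂ)/(hbar:ℂ)) * (ξ:ℂ)
          + ((-(g*(1+β*t))/(4*hbar) : ℝ) : ℂ) * ((ξ:ℂ)*(ξ:ℂ)))
        ((Complex.I * (p₀:ℂ)/(hbar:ℂ)) + 2 * ((-(g*(1+β*t))/(4*hbar) : ℝ) : ℂ) * (ξ:ℂ)) ξ := by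
      intro ξ
      have h1 : HasDerivAt (fun ξ : ℝ => ((ξ:ℝ):ℂ)) 1 ξ := by
        simpa using (hasDerivAt_id ξ).ofReal_comp
      have h2 := h1.const_mul (Complex.I * (p₀:ℂ)/(hbar:ℂ))
      have h3 := (h1.fun_mul h1).const_mul (((-(g*(1+β*t))/(4*hbar) : ℝ) : ℂ))
      have h4 := h2.fun_add h3
      refine h4.congr_deriv ?_
      push_cast
      ring
    have hd1 : deriv (fun ξ : ℝ => χ t ξ 0) = fun ξ : ℝ =>
        ((Complex.I * (p₀:ℂ)/(hbar:ℂ)) + 2 * ((-(g*(1+β*t))/(4*hbar) : ℝ) : ℂ) * (ξ:ℂ)) *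
          Complex.exp ((Complex.I * (p₀:ℂ)/(hbar:ℂ)) * (ξ:ℂ)
            + ((-(g*(1+β*t))/(4*hbar) : ℝ) : ℂ) * ((ξ:ℂ)*(ξ:ℂ))) := by
      rw [hform0]
      funext ξ
      have := (hA ξ).cexp
      rw [this.deriv]
      ring
    rw [iteratedDeriv_succ, iteratedDeriv_one, hd1]
    have h1 : HasDerivAt (fun ξ : ℝ => ((ξ:ℝ):ℂ)) 1 0 := by
      simpa using (hasDerivAt_id (0:ℝ)).ofReal_comp
    have hlinp : HasDerivAt (fun ξ : ℝ => (Complex.I * (p₀:ℂ)/(hbar:ℂ))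
        + 2 * ((-(g*(1+β*t))/(4*hbar) : ℝ) : ℂ) * (ξ:ℂ))
        (2 * ((-(g*(1+β*t))/(4*hbar) : ℝ) : ℂ)) 0 := by
      have := (h1.const_mul (2 * ((-(g*(1+β*t))/(4*hbar) : ℝ) : ℂ))).const_add
        (Complex.I * (p₀:ℂ)/(hbar:ℂ))
      simpa using this
    have hprod := hlinp.fun_mul ((hA 0).cexp)
    rw [hprod.deriv]
    have hhr : hbar ≠ 0 := ne_of_gt hhbar
    trans ((-(g*(1+β*t))/(2*hbar) + -(p₀^2/hbar^2) : ℝ) : ℂ)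
    · push_cast
      simp only [Complex.ofReal_zero, mul_zero, zero_mul, add_zero, zero_add,
        Complex.exp_zero, mul_one, one_mul]
      linear_combination ((p₀:ℂ)^2/((hbar:ℂ))^2) * Complex.I_sq
    · rw [show -(1/(hbar:ℂ)^2) * ((p₀^2 + hbar*(g/2+σ^2*t) : ℝ):ℂ)
          = ((-(1/hbar^2) * (p₀^2 + hbar*(g/2+σ^2*t)) : ℝ) : ℂ) from by push_cast; ring]
      refine Complex.ofReal_inj.mpr ?_
      rw [hβ]
      field_simp
      ring
  exact ⟨h1final, h2final⟩
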